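/- Let f : [a,b] → ℝ with f' continuous on [a,b] and f'' bounded on (a,b), and suppose G is an antiderivative of x ↦ sqrt(1 + f'(x)²) on [a,b]. Then the uniform polygonal lengths L_n converge to G(b) − G(a). -/

import Mathlib

open Real Filter Finset Set

lemma sqrt_one_add_sq_lip (u v : ℝ) :
    |Real.sqrt (1 + u ^ 2) - Real.sqrt (1 + v ^ 2)| ≤ |u - v| := by
  set s := Real.sqrt (1 + u ^ 2) with hs'
  set t := Real.sqrt (1 + v ^ 2) with ht'
  have hs2 : s ^ 2 = 1 + u ^ 2 := Real.sq_sqrt (by positivity)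
  have ht2 : t ^ 2 = 1 + v ^ 2 := Real.sq_sqrt (by positivity)
  have hs0 : 0 ≤ s := Real.sqrt_nonneg _
  have ht0 : 0 ≤ t := Real.sqrt_nonneg _
  have hus : |u| ≤ s := by nlinarith [abs_nonneg u, sq_abs u]
  have hvt : |v| ≤ t := by nlinarith [abs_nonneg v, sq_abs v]
  have hst : 0 < s + t := by nlinarith
  have key : |s - t| * (s + t) = |u - v| * |u + v| := by
    have h1 : (s - t) * (s + t) = (u - v) * (u + v) := by nlinarith
    calc |s - t| * (s + t) = |s - t| * |s + t| := by rw [abs_of_pos hst]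
      _ = |(s - t) * (s + t)| := (abs_mul _ _).symm
      _ = |(u - v) * (u + v)| := by rw [h1]
      _ = |u - v| * |u + v| := abs_mul _ _
  have h2 : |u + v| ≤ s + t := (abs_add_le u v).trans (add_le_add hus hvt)
  have h3 : |s - t| * (s + t) ≤ |u - v| * (s + t) :=
    key.le.trans (mul_le_mul_of_nonneg_left h2 (abs_nonneg _))
  exact le_of_mul_le_mul_right h3 hst

theorem stmt_5 (a b M : ℝ) (hab : a < b) (f f' f'' G : ℝ → ℝ)
    (hf : ∀ x ∈ Set.Icc a b, HasDerivAt f (f' x) x)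
    (hf'cont : ContinuousOn f' (Set.Icc a b))
    (hf' : ∀ x ∈ Set.Ioo a b, HasDerivAt f' (f'' x) x)
    (hM : ∀ x ∈ Set.Ioo a b, |f'' x| ≤ M)
    (hG : ∀ x ∈ Set.Icc a b, HasDerivAt G (Real.sqrt (1 + f' x ^ 2)) x) :
    Filter.Tendsto
      (fun n : ℕ => ∑ k ∈ Finset.range n,
        Real.sqrt (((b - a) / n)^2 +
          (f (a + (k + 1) * ((b - a) / n)) - f (a + k * ((b - a) / n)))^2))
      Filter.atTop (nhds (G b - G a)) := by
  have hMnn : 0 ≤ M := by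
    have hmem : (a + b) / 2 ∈ Set.Ioo a b := ⟨by linarith, by linarith⟩
    exact (abs_nonneg _).trans (hM _ hmem)
  have hfc : ContinuousOn f (Set.Icc a b) :=
    fun x hx => (hf x hx).continuousAt.continuousWithinAt
  have hGc : ContinuousOn G (Set.Icc a b) :=
    fun x hx => (hG x hx).continuousAt.continuousWithinAt
  have hlip : ∀ x ∈ Set.Ioo a b, ∀ y ∈ Set.Ioo a b, |f' x - f' y| ≤ M * |x - y| := by
    intro x hx y hy
    have := Convex.norm_image_sub_le_of_norm_hasDerivWithin_le
      (f := f') (f' := f'') (C := M) (s := Set.Ioo a b)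
      (fun z hz => (hf' z hz).hasDerivWithinAt)
      (fun z hz => by simpa [Real.norm_eq_abs] using hM z hz)
      (convex_Ioo a b) hy hx
    simpa [Real.norm_eq_abs] using this
  set C := G b - G a with hC
  have key : ∀ n : ℕ, 1 ≤ n →
      |(∑ k ∈ Finset.range n, Real.sqrt (((b - a) / n)^2 +
          (f (a + (k + 1) * ((b - a) / n)) - f (a + k * ((b - a) / n)))^2)) - C|
        ≤ M * (b - a) ^ 2 / n := by
    intro n hn
    have hn0 : (0:ℝ) < n := by exact_mod_cast hn
    set Δ : ℝ := (b - a) / n with hΔdef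
    have hΔ : 0 < Δ := div_pos (by linarith) hn0
    set x : ℕ → ℝ := fun k => a + k * Δ with hxdef
    have hxn : x n = b := by
      simp only [hxdef, hΔdef]
      field_simp
      ring
    have hnΔ : (n:ℝ) * Δ = b - a := by
      rw [hΔdef]; field_simp
    have hxmem : ∀ k ≤ n, x k ∈ Set.Icc a b := by
      intro k hk
      have h1 : 0 ≤ (k:ℝ) * Δ := mul_nonneg (Nat.cast_nonneg k) hΔ.le
      have hk' : (k:ℝ) ≤ n := Nat.cast_le.mpr hk
      have h2 : (k:ℝ) * Δ ≤ n * Δ := mul_le_mul_of_nonneg_right hk' hΔ.le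
      exact ⟨by simp only [hxdef]; linarith, by simp only [hxdef]; linarith⟩
    have hx0 : x 0 = a := by simp [hxdef]
    have htel : C = ∑ k ∈ Finset.range n, (G (x (k + 1)) - G (x k)) := by
      rw [Finset.sum_range_sub (fun k => G (x k)), hxn, hx0, hC]
    rw [htel, ← Finset.sum_sub_distrib]
    refine (Finset.abs_sum_le_sum_abs _ _).trans ?_
    have hbound : ∀ k ∈ Finset.range n,
        |Real.sqrt (((b - a) / n)^2 +
          (f (a + (k + 1) * ((b - a) / n)) - f (a + k * ((b - a) / n)))^2)
          - (G (x (k + 1)) - G (x k))| ≤ M * Δ ^ 2 := by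
      intro k hk
      have hkn : k < n := Finset.mem_range.mp hk
      have hlt : x k < x (k + 1) := by
        simp only [hxdef]
        push_cast
        nlinarith
      have hsubI : Set.Ioo (x k) (x (k + 1)) ⊆ Set.Ioo a b := by
        intro z hz
        have h1 := (hxmem k hkn.le).1
        have h2 := (hxmem (k + 1) hkn).2
        exact ⟨lt_of_le_of_lt h1 hz.1, lt_of_lt_of_le hz.2 h2⟩
      have hsubC : Set.Icc (x k) (x (k + 1)) ⊆ Set.Icc a b :=
        Set.Icc_subset_Icc (hxmem k hkn.le).1 (hxmem (k + 1) hkn).2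
      have hdiff : x (k + 1) - x k = Δ := by
        simp only [hxdef]; push_cast; ring
      obtain ⟨c, hc, hcd⟩ := exists_hasDerivAt_eq_slope f f' hlt
        (hfc.mono hsubC) (fun z hz => hf z (hsubC (Set.Ioo_subset_Icc_self hz)))
      obtain ⟨d, hd, hdd⟩ := exists_hasDerivAt_eq_slope G
        (fun z => Real.sqrt (1 + f' z ^ 2)) hlt
        (hGc.mono hsubC) (fun z hz => hG z (hsubC (Set.Ioo_subset_Icc_self hz)))
      rw [hdiff] at hcd hdd
      have hfx : f (x (k + 1)) - f (x k) = f' c * Δ := by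
        rw [hcd]; field_simp
      have hGx : G (x (k + 1)) - G (x k) = Real.sqrt (1 + f' d ^ 2) * Δ := by
        rw [hdd]; field_simp
      have hT : Real.sqrt (((b - a) / n)^2 +
          (f (a + (k + 1) * ((b - a) / n)) - f (a + k * ((b - a) / n)))^2)
          = Real.sqrt (1 + f' c ^ 2) * Δ := by
        have e1 : a + ((k:ℝ) + 1) * ((b - a) / n) = x (k + 1) := by
          simp only [hxdef, hΔdef]; push_cast; ring
        have e2 : a + (k:ℝ) * ((b - a) / n) = x k := by
          simp only [hxdef, hΔdef]
        rw [e1, e2, hfx, show Δ ^ 2 + (f' c * Δ) ^ 2 = Δ ^ 2 * (1 + f' c ^ 2) by ring,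
          Real.sqrt_mul (sq_nonneg Δ), Real.sqrt_sq hΔ.le]
        ring
      rw [hT, hGx, ← sub_mul, abs_mul, abs_of_pos hΔ]
      have hcd' : |c - d| ≤ Δ := by
        rw [abs_le]
        refine ⟨by linarith [hc.1, hc.2, hd.1, hd.2, hdiff],
          by linarith [hc.1, hc.2, hd.1, hd.2, hdiff]⟩
      have h1 : |Real.sqrt (1 + f' c ^ 2) - Real.sqrt (1 + f' d ^ 2)| ≤ |f' c - f' d| :=
        sqrt_one_add_sq_lip _ _
      have h2 : |f' c - f' d| ≤ M * |c - d| := hlip c (hsubI hc) d (hsubI hd)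
      have h3 : M * |c - d| ≤ M * Δ := by nlinarith [abs_nonneg (c - d)]
      calc |Real.sqrt (1 + f' c ^ 2) - Real.sqrt (1 + f' d ^ 2)| * Δ
          ≤ (M * Δ) * Δ := by
            apply mul_le_mul_of_nonneg_right _ hΔ.le
            exact h1.trans (h2.trans h3)
        _ = M * Δ ^ 2 := by ring
    refine (Finset.sum_le_sum hbound).trans ?_
    rw [Finset.sum_const, Finset.card_range, nsmul_eq_mul]
    have : (n:ℝ) * (M * Δ ^ 2) = M * (b - a) ^ 2 / n := by
      simp only [hΔdef]
      field_simp
    rw [this]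
  have h0 : Tendsto (fun n : ℕ => M * (b - a) ^ 2 / n) atTop (nhds 0) :=
    tendsto_const_div_atTop_nhds_zero_nat _
  have hsq : Tendsto (fun n : ℕ => (∑ k ∈ Finset.range n,
      Real.sqrt (((b - a) / n)^2 +
        (f (a + (k + 1) * ((b - a) / n)) - f (a + k * ((b - a) / n)))^2)) - C)
      atTop (nhds 0) := by
    apply squeeze_zero_norm' _ h0
    filter_upwards [eventually_ge_atTop 1] with n hn
    simpa [Real.norm_eq_abs] using key n hn
  have := hsq.add_const C
  simpa using this
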